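/- Let (X,d) be a metric space, scl a scaling, and (E_i)_{i≥1} a countable cover of X. Then the Hausdorff and packing scales are countably stable: scl_H X = sup_{i≥1} scl_H E_i and scl_P X = sup_{i≥1} scl_P E_i. -/

import Mathlib

open Filter MeasureTheory Metric Set
open scoped ENNReal Topology NNReal

noncomputable section

/-- A *scaling* is a family `(s α)_{α>0}` of positive non-decreasing functions on `(0,1)`
such that for all `α > β > 0` there is `λ₀ > 1` with, for every `λ ∈ (1, λ₀)`,
`s α ε / s β (ε^λ) → 0` and `s α ε / (s β ε)^λ → 0` as `ε → 0⁺`. -/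
def IsScaling (s : ℝ → ℝ → ℝ) : Prop :=
  (∀ α : ℝ, 0 < α → ∀ ε ∈ Set.Ioo (0:ℝ) 1, 0 < s α ε) ∧
  (∀ α : ℝ, 0 < α → MonotoneOn (s α) (Set.Ioo (0:ℝ) 1)) ∧
  (∀ α β : ℝ, 0 < β → β < α → ∃ l₀ > (1:ℝ), ∀ l ∈ Set.Ioo (1:ℝ) l₀,
    Tendsto (fun ε : ℝ => s α ε / s β (ε ^ l)) (𝓝[>] (0:ℝ)) (𝓝 0) ∧
    Tendsto (fun ε : ℝ => s α ε / (s β ε) ^ l) (𝓝[>] (0:ℝ)) (𝓝 0))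

/-- The covering number `N_ε(E)`: minimal cardinality of a finite cover of `E` by balls of
radius `ε` centered in `E` (`+∞` if there is no such finite cover). -/
def coveringNumber {X : Type*} [MetricSpace X] (E : Set X) (ε : ℝ) : ℝ≥0∞ :=
  ⨅ (t : Finset X) (_ : (↑t : Set X) ⊆ E ∧ E ⊆ ⋃ x ∈ t, ball x ε), (t.card : ℝ≥0∞)

/-- Lower box scale of a set. -/
def lowerBoxScale {X : Type*} [MetricSpace X] (s : ℝ → ℝ → ℝ) (E : Set X) : ℝ≥0∞ :=
  ⨆ (α : ℝ) (_ : 0 < α ∧ Tendsto (fun ε : ℝ => coveringNumber E ε * ENNReal.ofReal (s α ε))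
      (𝓝[>] (0:ℝ)) (𝓝 (⊤ : ℝ≥0∞))), ENNReal.ofReal α

/-- Upper box scale of a set. -/
def upperBoxScale {X : Type*} [MetricSpace X] (s : ℝ → ℝ → ℝ) (E : Set X) : ℝ≥0∞ :=
  ⨅ (α : ℝ) (_ : 0 < α ∧ Tendsto (fun ε : ℝ => coveringNumber E ε * ENNReal.ofReal (s α ε))
      (𝓝[>] (0:ℝ)) (𝓝 (0 : ℝ≥0∞))), ENNReal.ofReal α

/-- `H_ε^φ(E)`: Hausdorff pre-measure at scale `ε`, via countable covers by balls of radii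
at most `ε`. -/
def hausdorffPre {X : Type*} [MetricSpace X] (φ : ℝ → ℝ) (E : Set X) (ε : ℝ) : ℝ≥0∞ :=
  ⨅ (c : ℕ → X) (r : ℕ → ℝ) (t : Set ℕ)
    (_ : (∀ n ∈ t, r n ∈ Set.Ioc (0:ℝ) ε) ∧ E ⊆ ⋃ n ∈ t, ball (c n) (r n)),
    ∑' n : t, ENNReal.ofReal (φ (r n))

/-- `H^φ(E) = lim_{ε→0} H_ε^φ(E)`. -/
def hausdorffMeasureOf {X : Type*} [MetricSpace X] (φ : ℝ → ℝ) (E : Set X) : ℝ≥0∞ :=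
  ⨆ (ε : ℝ) (_ : 0 < ε), hausdorffPre φ E ε

/-- Hausdorff scale of a set. -/
def hausdorffScale {X : Type*} [MetricSpace X] (s : ℝ → ℝ → ℝ) (E : Set X) : ℝ≥0∞ :=
  ⨆ (α : ℝ) (_ : 0 < α ∧ hausdorffMeasureOf (s α) E = ⊤), ENNReal.ofReal α

/-- Packing scale of a set, via countable covers and upper box scales. -/
def packingScale {X : Type*} [MetricSpace X] (s : ℝ → ℝ → ℝ) (A : Set X) : ℝ≥0∞ :=
  ⨅ (E : ℕ → Set X) (_ : (⋃ n, E n) = A), ⨆ n, upperBoxScale s (E n)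

/-- Lower local scale of a measure at a point. -/
def lowerLocalScale {X : Type*} [MetricSpace X] [MeasurableSpace X]
    (s : ℝ → ℝ → ℝ) (μ : Measure X) (x : X) : ℝ≥0∞ :=
  ⨆ (α : ℝ) (_ : 0 < α ∧ Tendsto (fun ε : ℝ => μ (ball x ε) / ENNReal.ofReal (s α ε))
      (𝓝[>] (0:ℝ)) (𝓝 (0 : ℝ≥0∞))), ENNReal.ofReal α

/-- Upper local scale of a measure at a point. -/
def upperLocalScale {X : Type*} [MetricSpace X] [MeasurableSpace X]
    (s : ℝ → ℝ → ℝ) (μ : Measure X) (x : X) : ℝ≥0∞ :=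
  ⨅ (α : ℝ) (_ : 0 < α ∧ Tendsto (fun ε : ℝ => μ (ball x ε) / ENNReal.ofReal (s α ε))
      (𝓝[>] (0:ℝ)) (𝓝 (⊤ : ℝ≥0∞))), ENNReal.ofReal α

/-- Scale of a measure: infimum of the scale over Borel sets of positive measure. -/
def measureScale {X : Type*} [MetricSpace X] [MeasurableSpace X]
    (sc : Set X → ℝ≥0∞) (μ : Measure X) : ℝ≥0∞ :=
  ⨅ (E : Set X) (_ : MeasurableSet E ∧ 0 < μ E), sc E

/-- `*`-scale of a measure: infimum of the scale over Borel sets of full measure. -/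
def measureScaleStar {X : Type*} [MetricSpace X] [MeasurableSpace X]
    (sc : Set X → ℝ≥0∞) (μ : Measure X) : ℝ≥0∞ :=
  ⨅ (E : Set X) (_ : MeasurableSet E ∧ μ Eᶜ = 0), sc E

/-- Quantization number `Q_μ(ε)`. -/
def quantizationNumber {X : Type*} [MetricSpace X] [MeasurableSpace X]
    (μ : Measure X) (ε : ℝ) : ℝ≥0∞ :=
  ⨅ (t : Finset X) (_ : ∫⁻ x, (⨅ c ∈ t, edist x c) ∂μ ≤ ENNReal.ofReal ε), (t.card : ℝ≥0∞)

/-- Lower quantization scale of a measure. -/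
def lowerQuantScale {X : Type*} [MetricSpace X] [MeasurableSpace X]
    (s : ℝ → ℝ → ℝ) (μ : Measure X) : ℝ≥0∞ :=
  ⨆ (α : ℝ) (_ : 0 < α ∧ Tendsto (fun ε : ℝ => quantizationNumber μ ε * ENNReal.ofReal (s α ε))
      (𝓝[>] (0:ℝ)) (𝓝 (⊤ : ℝ≥0∞))), ENNReal.ofReal α

/-- Upper quantization scale of a measure. -/
def upperQuantScale {X : Type*} [MetricSpace X] [MeasurableSpace X]
    (s : ℝ → ℝ → ℝ) (μ : Measure X) : ℝ≥0∞ :=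
  ⨅ (α : ℝ) (_ : 0 < α ∧ Tendsto (fun ε : ℝ => quantizationNumber μ ε * ENNReal.ofReal (s α ε))
      (𝓝[>] (0:ℝ)) (𝓝 (0 : ℝ≥0∞))), ENNReal.ofReal α

/-- Packing number `Ñ_ε(E)`: maximal cardinality of an `ε`-separated subset of `E`. -/
def packingNumber {X : Type*} [MetricSpace X] (E : Set X) (ε : ℝ) : ℝ≥0∞ :=
  ⨆ (t : Finset X) (_ : (↑t : Set X) ⊆ E ∧ ∀ x ∈ t, ∀ y ∈ t, x ≠ y → ε ≤ dist x y),
    (t.card : ℝ≥0∞)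

/-- `P_ε^φ(E)`: supremum of `Σ φ(r_i)` over `ε`-packs of `E` (pairwise disjoint balls of `E`,
centered in `E`, with radii at most `ε`). -/
def packingPre {X : Type*} [MetricSpace X] (φ : ℝ → ℝ) (E : Set X) (ε : ℝ) : ℝ≥0∞ :=
  ⨆ (t : Finset (X × ℝ)) (_ : (∀ p ∈ t, p.1 ∈ E ∧ p.2 ∈ Set.Ioc (0:ℝ) ε) ∧
      (↑t : Set (X × ℝ)).Pairwise fun p q => Disjoint (ball p.1 p.2 ∩ E) (ball q.1 q.2 ∩ E)),
    ∑ p ∈ t, ENNReal.ofReal (φ p.2)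

/-- The packing pre-measure `P_0^φ(E) = lim_{ε→0} P_ε^φ(E)`. -/
def packingPre0 {X : Type*} [MetricSpace X] (φ : ℝ → ℝ) (E : Set X) : ℝ≥0∞ :=
  ⨅ (ε : ℝ) (_ : 0 < ε), packingPre φ E ε

/-- The packing `φ`-measure `P^φ(E)`. -/
def packingMeasureOf {X : Type*} [MetricSpace X] (φ : ℝ → ℝ) (E : Set X) : ℝ≥0∞ :=
  ⨅ (F : ℕ → Set X) (_ : (⋃ n, F n) = E), ∑' n, packingPre0 φ (F n)


section Aux

variable {X : Type*} [MetricSpace X] {s : ℝ → ℝ → ℝ}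

lemma scaling_le (hs : IsScaling s) {α β : ℝ} (hβ : 0 < β) (hβα : β < α) {c : ℝ} (hc : 0 < c) :
    ∀ᶠ ε in 𝓝[>] (0:ℝ), s α ε ≤ c * s β (ε / 2) ∧ s α ε ≤ c * s β ε := by
  obtain ⟨l₀, hl₀, hl⟩ := hs.2.2 α β hβ hβα
  set l : ℝ := (1 + l₀) / 2 with hldef
  have hl1 : 1 < l := by rw [hldef]; linarith
  have hll : l < l₀ := by rw [hldef]; linarith
  have h2 : ∀ᶠ ε in 𝓝[>] (0:ℝ), s α ε / s β (ε ^ l) < c :=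
    (hl l ⟨hl1, hll⟩).1.eventually (gt_mem_nhds hc)
  have h3 : ∀ᶠ ε in 𝓝[>] (0:ℝ), ε ^ (l - 1) < 2⁻¹ := by
    have hcont : ContinuousAt (fun ε : ℝ => ε ^ (l - 1)) 0 :=
      Real.continuousAt_rpow_const 0 (l - 1) (Or.inr (by linarith))
    have ht : Tendsto (fun ε : ℝ => ε ^ (l - 1)) (𝓝[>] 0) (𝓝 0) := by
      have := hcont.tendsto
      rw [Real.zero_rpow (by linarith : l - 1 ≠ 0)] at this
      exact this.mono_left nhdsWithin_le_nhds
    exact ht.eventually (gt_mem_nhds (by norm_num))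
  have h4 : ∀ᶠ ε in 𝓝[>] (0:ℝ), ε < 1 :=
    eventually_nhdsWithin_of_eventually_nhds (gt_mem_nhds one_pos)
  have h5 : ∀ᶠ ε in 𝓝[>] (0:ℝ), 0 < ε := eventually_mem_nhdsWithin
  filter_upwards [h2, h3, h4, h5] with ε he2 he3 he4 he5
  have hεl_pos : 0 < ε ^ l := Real.rpow_pos_of_pos he5 l
  have hεl_le : ε ^ l ≤ ε := by
    have := Real.rpow_le_rpow_of_exponent_ge he5 he4.le hl1.le
    simpa [Real.rpow_one] using this
  have hεl_half : ε ^ l ≤ ε / 2 := by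
    have heq : ε ^ l = ε * ε ^ (l - 1) := by
      have h := Real.rpow_add he5 1 (l - 1)
      rw [Real.rpow_one, show (1:ℝ) + (l - 1) = l by ring] at h
      exact h
    rw [heq]
    calc ε * ε ^ (l - 1) ≤ ε * 2⁻¹ :=
          mul_le_mul_of_nonneg_left he3.le he5.le
      _ = ε / 2 := by ring
  have hεl_mem : ε ^ l ∈ Set.Ioo (0:ℝ) 1 := ⟨hεl_pos, lt_of_le_of_lt hεl_le he4⟩
  have hhalf_mem : ε / 2 ∈ Set.Ioo (0:ℝ) 1 := ⟨by linarith, by linarith⟩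
  have hε_mem : ε ∈ Set.Ioo (0:ℝ) 1 := ⟨he5, he4⟩
  have hβpos := hs.1 β hβ _ hεl_mem
  have h6 : s α ε < c * s β (ε ^ l) := (div_lt_iff₀ hβpos).1 he2
  have hmono := hs.2.1 β hβ
  have h7 : s β (ε ^ l) ≤ s β (ε / 2) := hmono hεl_mem hhalf_mem hεl_half
  have h8 : s β (ε / 2) ≤ s β ε := hmono hhalf_mem hε_mem (by linarith)
  constructor
  · exact h6.le.trans (mul_le_mul_of_nonneg_left h7 hc.le)
  · exact h6.le.trans (mul_le_mul_of_nonneg_left (h7.trans h8) hc.le)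

lemma hausdorffPre_mono {φ : ℝ → ℝ} {F E : Set X} (h : F ⊆ E) (ε : ℝ) :
    hausdorffPre φ F ε ≤ hausdorffPre φ E ε := by
  unfold hausdorffPre
  refine le_iInf fun c => le_iInf fun r => le_iInf fun t => le_iInf fun ht => ?_
  exact iInf_le_of_le c (iInf_le_of_le r (iInf₂_le t ⟨ht.1, h.trans ht.2⟩))

lemma hausdorffPre_anti {φ : ℝ → ℝ} {E : Set X} {ε ε' : ℝ} (h : ε ≤ ε') :
    hausdorffPre φ E ε' ≤ hausdorffPre φ E ε := by
  unfold hausdorffPre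
  refine le_iInf fun c => le_iInf fun r => le_iInf fun t => le_iInf fun ht => ?_
  exact iInf_le_of_le c (iInf_le_of_le r (iInf₂_le t
    ⟨fun n hn => ⟨(ht.1 n hn).1, (ht.1 n hn).2.trans h⟩, ht.2⟩))

lemma hausdorffMeasureOf_mono {φ : ℝ → ℝ} {F E : Set X} (h : F ⊆ E) :
    hausdorffMeasureOf φ F ≤ hausdorffMeasureOf φ E := by
  unfold hausdorffMeasureOf
  exact iSup₂_le fun ε hε => le_iSup₂_of_le ε hε (hausdorffPre_mono h ε)

lemma hausdorffMeasureOf_iUnion_zero {φ : ℝ → ℝ} {E : ℕ → Set X}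
    (h0 : ∀ i, hausdorffMeasureOf φ (E i) = 0) :
    hausdorffMeasureOf φ (⋃ i, E i) = 0 := by
  have pre0 : ∀ i, ∀ ε : ℝ, 0 < ε → hausdorffPre φ (E i) ε = 0 := by
    intro i ε hε
    have h1 : hausdorffPre φ (E i) ε ≤ hausdorffMeasureOf φ (E i) := by
      unfold hausdorffMeasureOf
      exact le_iSup₂ (f := fun ε (_ : 0 < ε) => hausdorffPre φ (E i) ε) ε hε
    rw [h0 i] at h1
    exact le_zero_iff.1 h1
  refine le_zero_iff.1 ?_
  unfold hausdorffMeasureOf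
  refine iSup₂_le fun ε hε => ?_
  refine ENNReal.le_of_forall_pos_le_add (b := 0) fun δ hδ _ => ?_
  rw [zero_add]
  obtain ⟨w, hw, hwsum⟩ := ENNReal.exists_pos_sum_of_countable
    (by exact_mod_cast hδ.ne' : (δ : ℝ≥0∞) ≠ 0) ℕ
  have key : ∀ i : ℕ, ∃ (c : ℕ → X) (r : ℕ → ℝ) (t : Set ℕ),
      ((∀ n ∈ t, r n ∈ Set.Ioc (0:ℝ) ε) ∧ E i ⊆ ⋃ n ∈ t, ball (c n) (r n)) ∧
      ∑' n : t, ENNReal.ofReal (φ (r n)) ≤ (w i : ℝ≥0∞) := by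
    intro i
    have hlt : hausdorffPre φ (E i) ε < (w i : ℝ≥0∞) := by
      rw [pre0 i ε hε]; exact_mod_cast hw i
    unfold hausdorffPre at hlt
    simp only [iInf_lt_iff] at hlt
    obtain ⟨c, r, t, ht, hsum⟩ := hlt
    exact ⟨c, r, t, ht, hsum.le⟩
  choose c r t ht hsum using key
  set C : ℕ → X := fun k => c k.unpair.1 k.unpair.2
  set R : ℕ → ℝ := fun k => r k.unpair.1 k.unpair.2
  set T : Set ℕ := {k | k.unpair.2 ∈ t k.unpair.1}
  have hcov : (∀ n ∈ T, R n ∈ Set.Ioc (0:ℝ) ε) ∧ (⋃ i, E i) ⊆ ⋃ n ∈ T, ball (C n) (R n) := by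
    constructor
    · intro k hk
      exact (ht k.unpair.1).1 _ hk
    · intro x hx
      obtain ⟨i, hi⟩ := Set.mem_iUnion.1 hx
      obtain ⟨n, hn, hxb⟩ := Set.mem_iUnion₂.1 ((ht i).2 hi)
      refine Set.mem_iUnion₂.2 ⟨Nat.pair i n, ?_, ?_⟩
      · show (Nat.pair i n).unpair.2 ∈ t (Nat.pair i n).unpair.1
        rw [Nat.unpair_pair]
        exact hn
      · show x ∈ ball (C (Nat.pair i n)) (R (Nat.pair i n))
        simp only [C, R, Nat.unpair_pair]
        exact hxb
  calc hausdorffPre φ (⋃ i, E i) ε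
      ≤ ∑' n : T, ENNReal.ofReal (φ (R n)) := by
        unfold hausdorffPre
        exact iInf_le_of_le C (iInf_le_of_le R (iInf₂_le T hcov))
    _ ≤ ∑' p : (Σ i : ℕ, t i), ENNReal.ofReal (φ (r p.1 p.2)) := by
        have hinj : Function.Injective
            (fun k : T => (⟨k.1.unpair.1, ⟨k.1.unpair.2, k.2⟩⟩ : Σ i : ℕ, t i)) := by
          intro k k' hkk
          have h1 : k.1.unpair.1 = k'.1.unpair.1 := congrArg Sigma.fst hkk
          have h2 : k.1.unpair.2 = k'.1.unpair.2 := by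
            have := congrArg (fun p : (Σ i : ℕ, t i) => (p.2 : ℕ)) hkk
            simpa using this
          have : k.1.unpair = k'.1.unpair := Prod.ext h1 h2
          exact Subtype.ext (by
            have := congrArg (fun p : ℕ × ℕ => Nat.pair p.1 p.2) this
            simpa [Nat.pair_unpair] using this)
        exact ENNReal.tsum_comp_le_tsum_of_injective hinj
          (fun p : (Σ i : ℕ, t i) => ENNReal.ofReal (φ (r p.1 p.2)))
    _ = ∑' (i : ℕ) (n : t i), ENNReal.ofReal (φ (r i n)) := ENNReal.tsum_sigma' _
    _ ≤ ∑' i : ℕ, (w i : ℝ≥0∞) := ENNReal.tsum_le_tsum fun i => hsum i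
    _ ≤ (δ : ℝ≥0∞) := hwsum.le

lemma hausdorff_escalate (hs : IsScaling s) {α β : ℝ} (hβ : 0 < β) (hβα : β < α)
    {F : Set X} (hne : hausdorffMeasureOf (s α) F ≠ 0) :
    hausdorffMeasureOf (s β) F = ⊤ := by
  obtain ⟨ε0, hε0, ha⟩ : ∃ ε0, 0 < ε0 ∧ hausdorffPre (s α) F ε0 ≠ 0 := by
    by_contra h
    push_neg at h
    refine hne (le_antisymm ?_ zero_le)
    unfold hausdorffMeasureOf
    exact iSup₂_le fun ε hε => (h ε hε).le
  set a := hausdorffPre (s α) F ε0 with hadef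
  have key : ∀ n : ℕ, (n : ℝ≥0∞) * a ≤ hausdorffMeasureOf (s β) F := by
    intro n
    rcases Nat.eq_zero_or_pos n with rfl | hn
    · simp
    have hnR : (0:ℝ) < (n:ℝ) := by exact_mod_cast hn
    have hc : (0:ℝ) < (n:ℝ)⁻¹ := by positivity
    obtain ⟨u, hu, hsub⟩ := mem_nhdsGT_iff_exists_Ioo_subset.1
      (scaling_le hs hβ hβα hc)
    set ε : ℝ := min (min ε0 (u / 2)) 2⁻¹ with hεdef
    have hupos : 0 < u := hu
    have hεpos : 0 < ε := by
      apply lt_min (lt_min hε0 (by linarith)) (by norm_num)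
    have hεε0 : ε ≤ ε0 := (min_le_left _ _).trans (min_le_left _ _)
    have hεu : ε < u := lt_of_le_of_lt ((min_le_left _ _).trans (min_le_right _ _)) (by linarith)
    have hε1 : ε < 1 := lt_of_le_of_lt (min_le_right _ _) (by norm_num)
    have h1 : a ≤ hausdorffPre (s α) F ε := hausdorffPre_anti hεε0
    have h2 : (n : ℝ≥0∞) * hausdorffPre (s α) F ε ≤ hausdorffPre (s β) F ε := by
      conv_rhs => unfold hausdorffPre
      refine le_iInf fun c => le_iInf fun r => le_iInf fun t => le_iInf fun htc => ?_
      have hcover : (n : ℝ≥0∞) * hausdorffPre (s α) F ε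
          ≤ (n : ℝ≥0∞) * ∑' m : t, ENNReal.ofReal (s α (r m)) := by
        refine mul_le_mul_right ?_ _
        unfold hausdorffPre
        exact iInf_le_of_le c (iInf_le_of_le r (iInf₂_le t htc))
      refine hcover.trans ?_
      rw [← ENNReal.tsum_mul_left]
      refine ENNReal.tsum_le_tsum fun m => ?_
      have hm := htc.1 m m.2
      have hm1 : (r m : ℝ) ∈ Set.Ioo (0:ℝ) u := ⟨hm.1, lt_of_le_of_lt hm.2 hεu⟩
      have := (hsub hm1).2
      have hsb : (n : ℝ) * s α (r m) ≤ s β (r m) := by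
        have h := mul_le_mul_of_nonneg_left this hnR.le
        rw [← mul_assoc, mul_inv_cancel₀ hnR.ne', one_mul] at h
        exact h
      calc (n : ℝ≥0∞) * ENNReal.ofReal (s α (r m))
          = ENNReal.ofReal ((n : ℝ) * s α (r m)) := by
            rw [ENNReal.ofReal_mul hnR.le, ENNReal.ofReal_natCast]
        _ ≤ ENNReal.ofReal (s β (r m)) := ENNReal.ofReal_le_ofReal hsb
    calc (n : ℝ≥0∞) * a ≤ (n : ℝ≥0∞) * hausdorffPre (s α) F ε := mul_le_mul_right h1 _
      _ ≤ hausdorffPre (s β) F ε := h2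
      _ ≤ hausdorffMeasureOf (s β) F := by
          unfold hausdorffMeasureOf
          exact le_iSup₂ (f := fun ε (_ : 0 < ε) => hausdorffPre (s β) F ε) ε hεpos
  refine top_le_iff.1 ?_
  calc (⊤ : ℝ≥0∞) = ⊤ * a := (ENNReal.top_mul ha).symm
    _ = (⨆ n : ℕ, (n : ℝ≥0∞)) * a := by rw [ENNReal.iSup_natCast]
    _ = ⨆ n : ℕ, (n : ℝ≥0∞) * a := ENNReal.iSup_mul _ _
    _ ≤ hausdorffMeasureOf (s β) F := iSup_le key

lemma coveringNumber_mono_half {E F : Set X} (hFE : F ⊆ E) (ε : ℝ) :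
    coveringNumber F ε ≤ coveringNumber E (ε / 2) := by
  classical
  unfold _root_.coveringNumber
  rcases F.eq_empty_or_nonempty with hFe | ⟨z0, hz0⟩
  · refine le_trans (iInf₂_le (∅ : Finset X) ?_) ?_
    · subst hFe; simp
    · simp
  refine le_iInf₂ fun t ht => ?_
  set f : X → X := fun x =>
    if h : (ball x (ε / 2) ∩ F).Nonempty then h.choose else z0 with hfdef
  have hfF : ∀ x, f x ∈ F := by
    intro x
    by_cases h : (ball x (ε / 2) ∩ F).Nonempty
    · simp only [hfdef, dif_pos h]
      exact h.choose_spec.2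
    · simp only [hfdef, dif_neg h]
      exact hz0
  have hfb : ∀ x, (ball x (ε / 2) ∩ F).Nonempty → f x ∈ ball x (ε / 2) := by
    intro x h
    simp only [hfdef, dif_pos h]
    exact h.choose_spec.1
  refine le_trans (iInf₂_le (t.image f) ?_) ?_
  · constructor
    · intro y hy
      obtain ⟨x, _, rfl⟩ := Finset.mem_image.1 (by exact_mod_cast hy)
      exact hfF x
    · intro z hz
      obtain ⟨x, hxt, hzx⟩ := Set.mem_iUnion₂.1 (ht.2 (hFE hz))
      have hne : (ball x (ε / 2) ∩ F).Nonempty := ⟨z, hzx, hz⟩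
      refine Set.mem_iUnion₂.2 ⟨f x, ?_, ?_⟩
      · exact_mod_cast Finset.mem_image_of_mem f (by exact_mod_cast hxt)
      · have h1 : dist z x < ε / 2 := mem_ball.1 hzx
        have h2 : dist (f x) x < ε / 2 := mem_ball.1 (hfb x hne)
        have : dist z (f x) ≤ dist z x + dist x (f x) := dist_triangle _ _ _
        rw [dist_comm x (f x)] at this
        exact mem_ball.2 (by linarith)
  · exact_mod_cast Finset.card_image_le

lemma tendsto_half_nhdsWithin :
    Tendsto (fun ε : ℝ => ε / 2) (𝓝[>] (0:ℝ)) (𝓝[>] (0:ℝ)) := by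
  apply tendsto_nhdsWithin_of_tendsto_nhds_of_eventually_within
  · have h := (continuous_id.div_const (2:ℝ)).tendsto (0:ℝ)
    simp only [id_eq, zero_div] at h
    exact h.mono_left nhdsWithin_le_nhds
  · exact eventually_mem_nhdsWithin.mono fun x hx => by
      simp only [Set.mem_Ioi] at hx ⊢; linarith

lemma upperBoxScale_mono (hs : IsScaling s) {F E : Set X} (hFE : F ⊆ E) :
    upperBoxScale s F ≤ upperBoxScale s E := by
  unfold upperBoxScale
  refine le_iInf₂ fun α hα => ?_
  refine ENNReal.le_of_forall_pos_le_add fun δ hδ _ => ?_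
  have hδR : (0:ℝ) < (δ:ℝ) := hδ
  have cond : 0 < α + (δ:ℝ) ∧ Tendsto
      (fun ε : ℝ => coveringNumber F ε * ENNReal.ofReal (s (α + δ) ε))
      (𝓝[>] (0:ℝ)) (𝓝 (0 : ℝ≥0∞)) := by
    refine ⟨by linarith [hα.1], ?_⟩
    have hbound : ∀ᶠ ε in 𝓝[>] (0:ℝ),
        coveringNumber F ε * ENNReal.ofReal (s (α + δ) ε)
          ≤ coveringNumber E (ε / 2) * ENNReal.ofReal (s α (ε / 2)) := by
      have hev := scaling_le hs hα.1 (by linarith : α < α + (δ:ℝ)) one_pos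
      filter_upwards [hev] with ε hε
      refine mul_le_mul' (coveringNumber_mono_half hFE ε) ?_
      exact ENNReal.ofReal_le_ofReal (by simpa using hε.1)
    have hlim : Tendsto (fun ε : ℝ => coveringNumber E (ε / 2) * ENNReal.ofReal (s α (ε / 2)))
        (𝓝[>] (0:ℝ)) (𝓝 (0 : ℝ≥0∞)) := hα.2.comp tendsto_half_nhdsWithin
    exact tendsto_of_tendsto_of_tendsto_of_le_of_le' tendsto_const_nhds hlim
      (Eventually.of_forall fun _ => zero_le) hbound
  calc upperBoxScale s F ≤ ENNReal.ofReal (α + (δ:ℝ)) := by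
        unfold upperBoxScale
        exact iInf₂_le (α + (δ:ℝ)) cond
    _ = ENNReal.ofReal α + ENNReal.ofReal (δ:ℝ) := ENNReal.ofReal_add hα.1.le hδR.le
    _ = ENNReal.ofReal α + (δ : ℝ≥0∞) := by rw [ENNReal.ofReal_coe_nnreal]

lemma packingScale_mono (hs : IsScaling s) {B A : Set X} (h : B ⊆ A) :
    packingScale s B ≤ packingScale s A := by
  unfold packingScale
  refine le_iInf₂ fun F hF => ?_
  refine le_trans (iInf₂_le (fun n => F n ∩ B) ?_) ?_
  · rw [← Set.iUnion_inter, hF, Set.inter_eq_right.2 h]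
  · exact iSup_mono fun n => upperBoxScale_mono hs Set.inter_subset_left

end Aux


/-- Countable stability of the Hausdorff and packing scales. -/
theorem hausdorff_packing_scale_countable_stability
    {X : Type*} [MetricSpace X] (s : ℝ → ℝ → ℝ) (hs : IsScaling s)
    (E : ℕ → Set X) (hE : (⋃ i, E i) = Set.univ) :
    hausdorffScale s (Set.univ : Set X) = ⨆ i, hausdorffScale s (E i) ∧
    packingScale s (Set.univ : Set X) = ⨆ i, packingScale s (E i) := by
  constructor
  · apply le_antisymm
    · unfold hausdorffScale
      refine iSup₂_le fun α hα => ?_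
      show ENNReal.ofReal α ≤ ⨆ i, hausdorffScale s (E i)
      by_contra hlt
      push_neg at hlt
      set R := ⨆ i, hausdorffScale s (E i) with hRdef
      have hRtop : R ≠ ⊤ := ne_top_of_lt hlt
      have htR : R.toReal < α := (ENNReal.lt_ofReal_iff_toReal_lt hRtop).1 hlt
      set β := (R.toReal + α) / 2 with hβdef
      have hβpos : 0 < β := by
        have h0 := ENNReal.toReal_nonneg (a := R)
        have := hα.1
        rw [hβdef]; linarith
      have hβα : β < α := by rw [hβdef]; linarith
      have hex : ∃ i, hausdorffMeasureOf (s α) (E i) ≠ 0 := by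
        by_contra hall
        push_neg at hall
        have h0 := hausdorffMeasureOf_iUnion_zero (φ := s α) (E := E) hall
        rw [hE, hα.2] at h0
        exact ENNReal.top_ne_zero h0
      obtain ⟨i, hi⟩ := hex
      have htop := hausdorff_escalate hs hβpos hβα hi
      have hle : ENNReal.ofReal β ≤ R := by
        refine le_trans ?_ (le_iSup (fun i => hausdorffScale s (E i)) i)
        unfold hausdorffScale
        exact le_iSup₂
          (f := fun γ (_ : 0 < γ ∧ hausdorffMeasureOf (s γ) (E i) = ⊤) => ENNReal.ofReal γ)
          β ⟨hβpos, htop⟩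
      have hcontra : R < ENNReal.ofReal β :=
        (ENNReal.lt_ofReal_iff_toReal_lt hRtop).2 (by rw [hβdef]; linarith)
      exact absurd hle hcontra.not_ge
    · refine iSup_le fun i => ?_
      unfold hausdorffScale
      refine iSup₂_le fun α hα => ?_
      have htop : hausdorffMeasureOf (s α) (Set.univ : Set X) = ⊤ := by
        refine top_le_iff.1 ?_
        rw [← hα.2]
        exact hausdorffMeasureOf_mono (Set.subset_univ _)
      exact le_iSup₂
        (f := fun γ (_ : 0 < γ ∧ hausdorffMeasureOf (s γ) (Set.univ : Set X) = ⊤) =>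
          ENNReal.ofReal γ) α ⟨hα.1, htop⟩
  · apply le_antisymm
    · set R := ⨆ i, packingScale s (E i) with hRdef
      refine ENNReal.le_of_forall_pos_le_add fun δ hδ hR => ?_
      have key : ∀ i, ∃ F : ℕ → Set X, (⋃ n, F n) = E i ∧
          ∀ n, upperBoxScale s (F n) ≤ R + δ := by
        intro i
        have h1 : packingScale s (E i) < R + δ :=
          lt_of_le_of_lt (le_iSup (fun i => packingScale s (E i)) i)
            (ENNReal.lt_add_right hR.ne (ENNReal.coe_ne_zero.2 hδ.ne'))
        unfold packingScale at h1
        simp only [iInf_lt_iff] at h1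
        obtain ⟨F, hF, hF2⟩ := h1
        exact ⟨F, hF, fun n => (le_iSup (fun n => upperBoxScale s (F n)) n).trans hF2.le⟩
      choose F hF1 hF2 using key
      have hcover : (⋃ k : ℕ, F k.unpair.1 k.unpair.2) = Set.univ := by
        rw [Set.eq_univ_iff_forall]
        intro x
        have hx : x ∈ ⋃ i, E i := by rw [hE]; trivial
        obtain ⟨i, hi⟩ := Set.mem_iUnion.1 hx
        rw [← hF1 i] at hi
        obtain ⟨n, hn⟩ := Set.mem_iUnion.1 hi
        refine Set.mem_iUnion.2 ⟨Nat.pair i n, ?_⟩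
        simp only [Nat.unpair_pair]
        exact hn
      calc packingScale s (Set.univ : Set X)
          ≤ ⨆ k : ℕ, upperBoxScale s (F k.unpair.1 k.unpair.2) := by
            unfold packingScale
            exact iInf₂_le (fun k : ℕ => F k.unpair.1 k.unpair.2) hcover
        _ ≤ R + δ := iSup_le fun k => hF2 _ _
    · exact iSup_le fun i => packingScale_mono hs (Set.subset_univ _)


end
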